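/- Let G be an undirected graph with distinct nodes s and t, let F be a balanced arc set in G⃗, and let P be an arc-simple s–t path in the residual digraph G⃗_F. Construct F' from F by adding all arcs a ∈ AP with a^{−1} ∉ F and removing all arcs a ∈ F with a^{−1} ∈ AP. Then F' is balanced and val(F') = val(F) + 1. -/

import Mathlib

/-!
The digraph `G⃗` associated with the multigraph `G : E → V × V` has the arc set
`E × Bool`: the arc `(e, true)` traverses edge `e` from `(G e).1` to `(G e).2`,
and `(e, false)` is the oppositely directed arc.
-/

/-- The tail of an arc of `G⃗`. -/
def arcTail {V E : Type} (G : E → V × V) (a : E × Bool) : V :=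
  cond a.2 (G a.1).1 (G a.1).2

/-- The head of an arc of `G⃗`. -/
def arcHead {V E : Type} (G : E → V × V) (a : E × Bool) : V :=
  cond a.2 (G a.1).2 (G a.1).1

/-- The reverse arc `a⁻¹`. -/
def arcInv {E : Type} (a : E × Bool) : E × Bool := (a.1, !a.2)

/-- `|F ∩ δ^out(v)|`, the number of arcs of `F` leaving `v`. -/
noncomputable def outCount {V E : Type} (G : E → V × V) (F : Finset (E × Bool)) (v : V) : ℕ :=
  Set.ncard {a : E × Bool | a ∈ F ∧ arcTail G a = v}

/-- `|F ∩ δ^in(v)|`, the number of arcs of `F` entering `v`. -/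
noncomputable def inCount {V E : Type} (G : E → V × V) (F : Finset (E × Bool)) (v : V) : ℕ :=
  Set.ncard {a : E × Bool | a ∈ F ∧ arcHead G a = v}

/-- `F ⊆ AG⃗` is balanced (w.r.t. the source `s` and the sink `t`) if
`|F ∩ δ^in(v)| = |F ∩ δ^out(v)|` for every `v ∈ VG − {s, t}`. -/
def BalancedArcs {V E : Type} (G : E → V × V) (s t : V) (F : Finset (E × Bool)) : Prop :=
  ∀ v : V, v ≠ s → v ≠ t → inCount G F v = outCount G F v

/-- The value `val(F) = |F ∩ δ^out(s)| − |F ∩ δ^in(s)|` of an arc set. -/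
noncomputable def bval {V E : Type} (G : E → V × V) (s : V) (F : Finset (E × Bool)) : ℤ :=
  (outCount G F s : ℤ) - (inCount G F s : ℤ)

/-- Directed walks in `G⃗`. -/
inductive DWalk {V E : Type} (G : E → V × V) : V → V → Type where
  | nil (v : V) : DWalk G v v
  | cons {u v w : V} (a : E × Bool) (ht : arcTail G a = u) (hh : arcHead G a = v)
      (tail : DWalk G v w) : DWalk G u w

namespace DWalk
/-- The list of arcs traversed by a directed walk. -/
def arcs {V E : Type} {G : E → V × V} : {u v : V} → DWalk G u v → List (E × Bool)
  | _, _, nil _ => []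
  | _, _, cons a _ _ p => a :: p.arcs
end DWalk

/-- The arcs of the residual digraph `G⃗_F = (VG, (AG⃗ − F) ∪ F⁻¹)`. -/
def residArcs {E : Type} (F : Finset (E × Bool)) : Set (E × Bool) :=
  {a | a ∉ F ∨ arcInv a ∈ F}

section Aux

lemma arcInv_invol {E : Type} : Function.Involutive (arcInv (E := E)) := by
  intro a; simp [arcInv]

lemma arcTail_inv {V E : Type} (G : E → V × V) (a : E × Bool) :
    arcTail G (arcInv a) = arcHead G a := by
  rcases a with ⟨e, _ | _⟩ <;> simp [arcTail, arcHead, arcInv]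

lemma arcHead_inv {V E : Type} (G : E → V × V) (a : E × Bool) :
    arcHead G (arcInv a) = arcTail G a := by
  rcases a with ⟨e, _ | _⟩ <;> simp [arcTail, arcHead, arcInv]

open Classical in
/-- The excess of a vertex as a sum of indicators. -/
lemma excess_eq {V E : Type} [Fintype E] [DecidableEq E] (G : E → V × V)
    (H : Finset (E × Bool)) (v : V) :
    (outCount G H v : ℤ) - (inCount G H v : ℤ) =
      ∑ a : E × Bool, (if a ∈ H then (1:ℤ) else 0) *
        ((if arcTail G a = v then (1:ℤ) else 0) - (if arcHead G a = v then 1 else 0)) := by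
  classical
  have ho : (outCount G H v : ℤ) =
      ∑ a : E × Bool, (if a ∈ H ∧ arcTail G a = v then (1:ℤ) else 0) := by
    rw [outCount, Set.ncard_eq_toFinset_card']
    rw [Set.toFinset_setOf, Finset.card_filter]
    push_cast
    rfl
  have hi : (inCount G H v : ℤ) =
      ∑ a : E × Bool, (if a ∈ H ∧ arcHead G a = v then (1:ℤ) else 0) := by
    rw [inCount, Set.ncard_eq_toFinset_card']
    rw [Set.toFinset_setOf, Finset.card_filter]
    push_cast
    rfl
  rw [ho, hi, ← Finset.sum_sub_distrib]
  refine Finset.sum_congr rfl fun a _ => ?_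
  by_cases h1 : a ∈ H <;> by_cases h2 : arcTail G a = v <;> by_cases h3 : arcHead G a = v <;>
    simp [h1, h2, h3]

open Classical in
/-- Telescoping sum along an arc-simple walk. -/
lemma walk_sum {V E : Type} [Fintype E] [DecidableEq E] (G : E → V × V)
    {u x : V} (W : DWalk G u x) (hnd : W.arcs.Nodup) (v : V) :
    ∑ a : E × Bool, (if a ∈ W.arcs then (1:ℤ) else 0) *
      ((if arcTail G a = v then (1:ℤ) else 0) - (if arcHead G a = v then 1 else 0)) =
      (if u = v then (1:ℤ) else 0) - (if x = v then 1 else 0) := by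
  classical
  induction W with
  | nil w => simp [DWalk.arcs]
  | cons a ht hh p ih =>
    rw [DWalk.arcs, List.nodup_cons] at hnd
    obtain ⟨hna, hnd'⟩ := hnd
    rw [DWalk.arcs]
    have hsplit : ∀ b : E × Bool, (if b ∈ a :: p.arcs then (1:ℤ) else 0) =
        (if b = a then (1:ℤ) else 0) + (if b ∈ p.arcs then 1 else 0) := by
      intro b
      by_cases h1 : b = a
      · subst h1; simp [hna]
      · simp [h1, List.mem_cons]
    simp only [hsplit, add_mul]
    rw [Finset.sum_add_distrib, ih hnd']
    have : ∑ b : E × Bool, (if b = a then (1:ℤ) else 0) *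
        ((if arcTail G b = v then (1:ℤ) else 0) - (if arcHead G b = v then 1 else 0)) =
        (if arcTail G a = v then (1:ℤ) else 0) - (if arcHead G a = v then 1 else 0) := by
      rw [Finset.sum_eq_single a]
      · simp
      · intro b _ hb; simp [hb]
      · intro h; exact absurd (Finset.mem_univ a) h
    rw [this, ht, hh]
    ring

open Classical in
/-- The paired correction terms cancel under the arc-reversal involution. -/
lemma cancel_sum {V E : Type} [Fintype E] [DecidableEq E] (G : E → V × V)
    (F : Finset (E × Bool)) (L : List (E × Bool)) (v : V) :
    ∑ a : E × Bool, ((if a ∈ L then (1:ℤ) else 0) * (if arcInv a ∈ F then 1 else 0)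
        + (if a ∈ F then 1 else 0) * (if arcInv a ∈ L then 1 else 0)) *
      ((if arcTail G a = v then (1:ℤ) else 0) - (if arcHead G a = v then 1 else 0)) = 0 := by
  classical
  set f : E × Bool → ℤ := fun a =>
    ((if a ∈ L then (1:ℤ) else 0) * (if arcInv a ∈ F then 1 else 0)
        + (if a ∈ F then 1 else 0) * (if arcInv a ∈ L then 1 else 0)) *
      ((if arcTail G a = v then (1:ℤ) else 0) - (if arcHead G a = v then 1 else 0)) with hf
  have hneg : ∀ a, f (arcInv a) = - f a := by
    intro a
    simp only [hf, arcInv_invol a, arcTail_inv, arcHead_inv]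
    ring
  have hre : ∑ a : E × Bool, f (arcInv a) = ∑ a : E × Bool, f a :=
    Function.Bijective.sum_comp (arcInv_invol.bijective) f
  have h2 : ∑ a : E × Bool, f a = ∑ a : E × Bool, - f a := by
    rw [← hre]
    exact Finset.sum_congr rfl fun a _ => hneg a
  rw [Finset.sum_neg_distrib] at h2
  linarith

end Aux

/-- Augmenting a balanced arc set `F` along an arc-simple
`s`–`t` path `P` of the residual digraph `G⃗_F` (adding all arcs `a ∈ AP` with
`a⁻¹ ∉ F` and removing all arcs `a ∈ F` with `a⁻¹ ∈ AP`) yields a balanced arc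
set `F'` with `val F' = val F + 1`. -/
theorem statement7 {V E : Type} [Fintype E] [DecidableEq E]
    (G : E → V × V) (s t : V) (hst : s ≠ t)
    (F : Finset (E × Bool)) (hbal : BalancedArcs G s t F)
    (P : DWalk G s t) (hres : ∀ a ∈ P.arcs, a ∈ residArcs F) (hsimple : P.arcs.Nodup)
    (F' : Finset (E × Bool))
    (hF' : F' = (F.filter (fun a => arcInv a ∉ P.arcs)) ∪
        (P.arcs.toFinset.filter (fun a => arcInv a ∉ F))) :
    BalancedArcs G s t F' ∧ bval G s F' = bval G s F + 1 := by
  classical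
  have hr : ∀ a ∈ P.arcs, a ∉ F ∨ arcInv a ∈ F := fun a ha => hres a ha
  -- pointwise description of the indicator of F'
  have hchi : ∀ a : E × Bool, (if a ∈ F' then (1:ℤ) else 0) =
      (if a ∈ F then (1:ℤ) else 0) + (if a ∈ P.arcs then (1:ℤ) else 0)
      - ((if a ∈ P.arcs then (1:ℤ) else 0) * (if arcInv a ∈ F then 1 else 0)
        + (if a ∈ F then 1 else 0) * (if arcInv a ∈ P.arcs then 1 else 0)) := by
    intro a
    have hmem : a ∈ F' ↔ (a ∈ F ∧ arcInv a ∉ P.arcs) ∨ (a ∈ P.arcs ∧ arcInv a ∉ F) := by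
      subst hF'
      simp [Finset.mem_union, Finset.mem_filter, List.mem_toFinset]
    by_cases h2 : a ∈ P.arcs
    · rcases hr a h2 with h1 | h3
      · by_cases h3 : arcInv a ∈ F <;> by_cases h4 : arcInv a ∈ P.arcs <;>
          simp [hmem, h1, h2, h3, h4]
      · by_cases h1 : a ∈ F <;> by_cases h4 : arcInv a ∈ P.arcs <;>
          simp [hmem, h1, h2, h3, h4]
    · by_cases h1 : a ∈ F <;> by_cases h3 : arcInv a ∈ F <;>
        by_cases h4 : arcInv a ∈ P.arcs <;> simp [hmem, h1, h2, h3, h4]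
  -- the key excess identity
  have key : ∀ v : V, (outCount G F' v : ℤ) - (inCount G F' v : ℤ) =
      ((outCount G F v : ℤ) - (inCount G F v : ℤ))
        + ((if s = v then (1:ℤ) else 0) - (if t = v then 1 else 0)) := by
    intro v
    have hsum : ∑ a : E × Bool, (if a ∈ F' then (1:ℤ) else 0) *
        ((if arcTail G a = v then (1:ℤ) else 0) - (if arcHead G a = v then 1 else 0)) =
        (∑ a : E × Bool, (if a ∈ F then (1:ℤ) else 0) *
          ((if arcTail G a = v then (1:ℤ) else 0) - (if arcHead G a = v then 1 else 0)))
        + (∑ a : E × Bool, (if a ∈ P.arcs then (1:ℤ) else 0) *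
          ((if arcTail G a = v then (1:ℤ) else 0) - (if arcHead G a = v then 1 else 0)))
        - (∑ a : E × Bool, ((if a ∈ P.arcs then (1:ℤ) else 0) * (if arcInv a ∈ F then 1 else 0)
            + (if a ∈ F then 1 else 0) * (if arcInv a ∈ P.arcs then 1 else 0)) *
          ((if arcTail G a = v then (1:ℤ) else 0) - (if arcHead G a = v then 1 else 0))) := by
      rw [← Finset.sum_add_distrib, ← Finset.sum_sub_distrib]
      refine Finset.sum_congr rfl fun a _ => ?_
      rw [hchi a]
      ring
    rw [excess_eq, excess_eq, hsum, walk_sum G P hsimple v, cancel_sum G F P.arcs v]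
    ring
  constructor
  · intro v hvs hvt
    have h1 := key v
    have h2 := hbal v hvs hvt
    have hs : (if s = v then (1:ℤ) else 0) = 0 := if_neg (fun h : s = v => hvs h.symm)
    have ht : (if t = v then (1:ℤ) else 0) = 0 := if_neg (fun h : t = v => hvt h.symm)
    rw [hs, ht, h2] at h1
    omega
  · have h1 := key s
    rw [if_pos rfl, if_neg (fun h : t = s => hst h.symm)] at h1
    simp only [bval]
    omega
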